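/- Let n ≥ 1 and let D_n be the diamond-path graph: its vertex set is {N, S, E, W} × {1,...,n}, and its edges are N_iE_i, N_iW_i, S_iE_i, S_iW_i for each i ∈ {1,...,n}, together with E_iW_{i+1} for each i ∈ {1,...,n-1}. For a binary string b = b_1 ... b_n, let T_b be the edge set consisting of: W_iS_i and E_iS_i for all i ∈ {1,...,n}, E_iW_{i+1} for all i ∈ {1,...,n-1}, plus the edge W_iN_i for each i with b_i = 0 and the edge E_iN_i for each i with b_i = 1. Then: (i) for every binary string b of length n, T_b is the edge set of a spanning tree of D_n; and (ii) for all binary strings b, b' of length n, the symmetric difference T_b Δ T_{b'} has cardinality 2 · d, where d is the Hamming distance between b and b'; in particular, T_b and T_{b'} differ in an edge exchange (exactly two edges) if and only if d = 1. -/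

import Mathlib

/-- The four corner labels of a diamond. -/
inductive Dir : Type
  | N | S | E | W
deriving DecidableEq

/-- The edge set of the diamond-path graph `D_n`: for each `i`, the four diamond edges
`N_iE_i, N_iW_i, S_iE_i, S_iW_i`, together with the connecting edges `E_iW_{i+1}`. -/
def diamondEdges (n : ℕ) : Set (Sym2 (Dir × Fin n)) :=
  {e | (∃ i : Fin n,
        e = s((Dir.N, i), (Dir.E, i)) ∨ e = s((Dir.N, i), (Dir.W, i)) ∨
        e = s((Dir.S, i), (Dir.E, i)) ∨ e = s((Dir.S, i), (Dir.W, i))) ∨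
       (∃ (i : Fin n) (h : (i : ℕ) + 1 < n),
        e = s((Dir.E, i), (Dir.W, ⟨(i : ℕ) + 1, h⟩)))}

/-- The diamond-path graph `D_n` on the vertex set `{N,S,E,W} × {1,...,n}`. -/
def diamondGraph (n : ℕ) : SimpleGraph (Dir × Fin n) :=
  SimpleGraph.fromEdgeSet (diamondEdges n)

/-- The edge set `T_b`: the edges `W_iS_i` and `E_iS_i` for all `i`, the edges `E_iW_{i+1}`
for all `i < n`, plus `W_iN_i` for each `i` with `b_i = 0` and `E_iN_i` for each `i` with
`b_i = 1`. -/
def treeEdges {n : ℕ} (b : Fin n → Bool) : Set (Sym2 (Dir × Fin n)) :=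
  {e | ∃ i : Fin n,
      e = s((Dir.W, i), (Dir.S, i)) ∨ e = s((Dir.E, i), (Dir.S, i)) ∨
      (∃ h : (i : ℕ) + 1 < n, e = s((Dir.E, i), (Dir.W, ⟨(i : ℕ) + 1, h⟩))) ∨
      (b i = false ∧ e = s((Dir.W, i), (Dir.N, i))) ∨
      (b i = true ∧ e = s((Dir.E, i), (Dir.N, i)))}

namespace DiamondAux
open SimpleGraph

section general
variable {V : Type} {G : SimpleGraph V} (rk : V → ℕ) (par : V → V)
  (hadj : ∀ {x y : V}, G.Adj x y → (rk x ≠ 0 ∧ y = par x) ∨ (rk y ≠ 0 ∧ x = par y))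
  (hlt : ∀ v, rk v ≠ 0 → rk (par v) < rk v)

include hadj hlt in
lemma no_cycle_aux (u : V) (c : G.Walk u u) (hc : c.IsCycle)
    (hmax : ∀ x ∈ c.support, rk x ≤ rk u) : False := by
  cases c with
  | nil => exact hc.not_of_nil
  | cons h q =>
    rename_i w
    obtain ⟨hpq, hne⟩ := (Walk.cons_isCycle_iff q h).mp hc
    have hlen : 2 ≤ q.length := by
      have := hc.three_le_length
      simp [Walk.length_cons] at this; omega
    have hw : rk w ≤ rk u := hmax w (by simp)
    have hwpar : w = par u := by
      rcases hadj h with ⟨_, h'⟩ | ⟨h1, h2⟩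
      · exact h'
      · exact absurd (hlt w h1) (by rw [← h2]; omega)
    have hlr : q.reverse.length = q.length := Walk.length_reverse q
    have hnn : ¬ q.reverse.Nil := by
      rw [Walk.nil_iff_length_eq, hlr]; omega
    obtain ⟨x, hadjux, q'', hq''⟩ := Walk.not_nil_iff.mp hnn
    have hx : rk x ≤ rk u := by
      refine hmax x ?_
      have : x ∈ q.support := by
        have : x ∈ q.reverse.support := by rw [hq'']; simp
        simpa [Walk.support_reverse] using this
      simp [this]
    have hxpar : x = par u := by
      rcases hadj hadjux with ⟨_, h'⟩ | ⟨h1, h2⟩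
      · exact h'
      · exact absurd (hlt x h1) (by rw [← h2]; omega)
    subst hwpar
    subst hxpar
    have hq''path : q''.IsPath := by
      have := hpq.reverse
      rw [hq''] at this
      exact this.of_cons
    rw [Walk.isPath_iff_eq_nil] at hq''path
    rw [hq''path] at hq''
    rw [hq''] at hlr
    simp at hlr
    omega

include hadj hlt in
lemma acyclic_aux : G.IsAcyclic := by
  classical
  intro v c hc
  obtain ⟨u, hu, hmax⟩ := Finset.exists_max_image c.support.toFinset rk
    ⟨v, List.mem_toFinset.mpr c.start_mem_support⟩
  rw [List.mem_toFinset] at hu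
  refine no_cycle_aux rk par hadj hlt u (c.rotate u hu) (hc.rotate hu) ?_
  intro x hx
  refine hmax x (List.mem_toFinset.mpr ?_)
  rcases List.mem_cons.mp ((c.rotate u hu).support_eq_cons ▸ hx) with rfl | hx'
  · exact hu
  · exact List.mem_of_mem_tail (((Walk.support_rotate c u hu).mem_iff).mp hx')
end general

variable {n : ℕ}

def rk : Dir × Fin n → ℕ
  | (Dir.W, i) => 4 * (i : ℕ)
  | (Dir.S, i) => 4 * (i : ℕ) + 1
  | (Dir.E, i) => 4 * (i : ℕ) + 2
  | (Dir.N, i) => 4 * (i : ℕ) + 3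

def par (b : Fin n → Bool) : Dir × Fin n → Dir × Fin n
  | (Dir.W, i) => if (i : ℕ) = 0 then (Dir.W, i)
      else (Dir.E, ⟨(i : ℕ) - 1, lt_of_le_of_lt (Nat.sub_le _ _) i.isLt⟩)
  | (Dir.S, i) => (Dir.W, i)
  | (Dir.E, i) => (Dir.S, i)
  | (Dir.N, i) => (if b i then Dir.E else Dir.W, i)

lemma par_lt (b : Fin n → Bool) (v : Dir × Fin n) (hv : rk v ≠ 0) :
    rk (par b v) < rk v := by
  obtain ⟨d, i⟩ := v
  cases d
  · by_cases hb : b i <;> simp [rk, par, hb]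
  · simp [rk, par]
  · simp [rk, par]
  · have : (i : ℕ) ≠ 0 := by simp [rk] at hv; omega
    simp [rk, par, this]; omega

lemma mem_par (b : Fin n → Bool) (v : Dir × Fin n) (hv : rk v ≠ 0) :
    s(v, par b v) ∈ treeEdges b := by
  obtain ⟨d, i⟩ := v
  cases d
  · by_cases hb : b i
    · exact ⟨i, by simp [par, hb, Sym2.eq_swap]⟩
    · exact ⟨i, by simp [par, hb, Sym2.eq_swap]⟩
  · exact ⟨i, by simp [par, Sym2.eq_swap]⟩
  · exact ⟨i, by simp [par]⟩
  · have h0 : (i : ℕ) ≠ 0 := by simp [rk] at hv; omega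
    have hlt : ((i : ℕ) - 1) + 1 < n := by omega
    refine ⟨⟨(i : ℕ) - 1, lt_of_le_of_lt (Nat.sub_le _ _) i.isLt⟩, Or.inr (Or.inr (Or.inl ?_))⟩
    refine ⟨hlt, ?_⟩
    have : (⟨(i : ℕ) - 1 + 1, hlt⟩ : Fin n) = i := by
      apply Fin.ext; simp; omega
    rw [this]
    simp [par, h0, Sym2.eq_swap]

lemma edge_shape (b : Fin n → Bool) {e : Sym2 (Dir × Fin n)} (he : e ∈ treeEdges b) :
    ∃ v, rk v ≠ 0 ∧ e = s(v, par b v) := by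
  obtain ⟨i, h | h | ⟨hlt, h⟩ | ⟨hb, h⟩ | ⟨hb, h⟩⟩ := he
  · exact ⟨(Dir.S, i), by simp [rk], by rw [h]; simp [par, Sym2.eq_swap]⟩
  · exact ⟨(Dir.E, i), by simp [rk], by rw [h]; simp [par]⟩
  · refine ⟨(Dir.W, ⟨(i : ℕ) + 1, hlt⟩), by simp [rk], ?_⟩
    rw [h]
    have : par b (Dir.W, (⟨(i : ℕ) + 1, hlt⟩ : Fin n)) = (Dir.E, i) := by
      simp only [par, Nat.add_one_ne_zero, if_false]
      exact Prod.ext rfl (Fin.ext (by simp))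
    rw [this, Sym2.eq_swap]
  · exact ⟨(Dir.N, i), by simp [rk], by rw [h]; simp [par, hb, Sym2.eq_swap]⟩
  · exact ⟨(Dir.N, i), by simp [rk], by rw [h]; simp [par, hb, Sym2.eq_swap]⟩

lemma adj_par (b : Fin n → Bool) {x y : Dir × Fin n}
    (h : (SimpleGraph.fromEdgeSet (treeEdges b)).Adj x y) :
    (rk x ≠ 0 ∧ y = par b x) ∨ (rk y ≠ 0 ∧ x = par b y) := by
  rw [SimpleGraph.fromEdgeSet_adj] at h
  obtain ⟨v, hv, he⟩ := edge_shape b h.1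
  rw [Sym2.eq_iff] at he
  rcases he with ⟨rfl, rfl⟩ | ⟨rfl, rfl⟩
  · exact Or.inl ⟨hv, rfl⟩
  · exact Or.inr ⟨hv, rfl⟩

lemma not_diag (b : Fin n → Bool) {e : Sym2 (Dir × Fin n)} (he : e ∈ treeEdges b) :
    ¬ e.IsDiag := by
  obtain ⟨v, hv, rfl⟩ := edge_shape b he
  rw [Sym2.mk_isDiag_iff]
  intro h
  have := par_lt b v hv
  rw [← h] at this
  omega

lemma sub_diamond (b : Fin n → Bool) : treeEdges b ⊆ diamondEdges n := by
  rintro e ⟨i, h | h | ⟨hlt, h⟩ | ⟨hb, h⟩ | ⟨hb, h⟩⟩ <;> subst h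
  · exact Or.inl ⟨i, Or.inr (Or.inr (Or.inr Sym2.eq_swap))⟩
  · exact Or.inl ⟨i, Or.inr (Or.inr (Or.inl Sym2.eq_swap))⟩
  · exact Or.inr ⟨i, hlt, rfl⟩
  · exact Or.inl ⟨i, Or.inr (Or.inl Sym2.eq_swap)⟩
  · exact Or.inl ⟨i, Or.inl Sym2.eq_swap⟩

lemma reach (b : Fin n → Bool) (hn : 1 ≤ n) :
    ∀ m (v : Dir × Fin n), rk v < m →
      (SimpleGraph.fromEdgeSet (treeEdges b)).Reachable v (Dir.W, ⟨0, hn⟩) := by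
  intro m
  induction m with
  | zero => intro v hv; omega
  | succ m ih =>
    intro v hv
    by_cases h0 : rk v = 0
    · have hv0 : v = (Dir.W, ⟨0, hn⟩) := by
        obtain ⟨d, i⟩ := v
        cases d <;> simp [rk] at h0
        exact Prod.ext rfl (Fin.ext h0)
      rw [hv0]
    · have hadj : (SimpleGraph.fromEdgeSet (treeEdges b)).Adj v (par b v) := by
        rw [SimpleGraph.fromEdgeSet_adj]
        refine ⟨mem_par b v h0, fun he => ?_⟩
        have := par_lt b v h0
        rw [← he] at this
        omega
      have := par_lt b v h0
      exact hadj.reachable.trans (ih (par b v) (by omega))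

lemma memWN (b : Fin n → Bool) (i : Fin n) :
    s((Dir.W, i), (Dir.N, i)) ∈ treeEdges b ↔ b i = false := by
  constructor
  · rintro ⟨j, h | h | ⟨hj, h⟩ | ⟨hb, h⟩ | ⟨hb, h⟩⟩ <;>
      simp [Sym2.eq_iff, Prod.ext_iff] at h
    rw [h]
    exact hb
  · intro hb
    exact ⟨i, Or.inr (Or.inr (Or.inr (Or.inl ⟨hb, rfl⟩)))⟩

lemma memEN (b : Fin n → Bool) (i : Fin n) :
    s((Dir.E, i), (Dir.N, i)) ∈ treeEdges b ↔ b i = true := by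
  constructor
  · rintro ⟨j, h | h | ⟨hj, h⟩ | ⟨hb, h⟩ | ⟨hb, h⟩⟩ <;>
      simp [Sym2.eq_iff, Prod.ext_iff] at h
    rw [h]
    exact hb
  · intro hb
    exact ⟨i, Or.inr (Or.inr (Or.inr (Or.inr ⟨hb, rfl⟩)))⟩

lemma sd_helper {b b' : Fin n → Bool} {e : Sym2 (Dir × Fin n)}
    (he : e ∈ treeEdges b) (hne : e ∉ treeEdges b') :
    ∃ i, b i ≠ b' i ∧ (e = s((Dir.W, i), (Dir.N, i)) ∨ e = s((Dir.E, i), (Dir.N, i))) := by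
  obtain ⟨i, h | h | ⟨hlt, h⟩ | ⟨hb, h⟩ | ⟨hb, h⟩⟩ := he
  · exact absurd ⟨i, Or.inl h⟩ hne
  · exact absurd ⟨i, Or.inr (Or.inl h)⟩ hne
  · exact absurd ⟨i, Or.inr (Or.inr (Or.inl ⟨hlt, h⟩))⟩ hne
  · subst h
    refine ⟨i, fun hbb => ?_, Or.inl rfl⟩
    exact hne ((memWN b' i).mpr (hbb ▸ hb))
  · subst h
    refine ⟨i, fun hbb => ?_, Or.inr rfl⟩
    exact hne ((memEN b' i).mpr (hbb ▸ hb))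

lemma sd_eq (b b' : Fin n → Bool) :
    symmDiff (treeEdges b) (treeEdges b') =
      (fun p : Fin n × Bool => s(((cond p.2 Dir.E Dir.W), p.1), (Dir.N, p.1))) ''
        {p : Fin n × Bool | b p.1 ≠ b' p.1} := by
  ext e
  rw [Set.mem_symmDiff]
  constructor
  · rintro (⟨h1, h2⟩ | ⟨h1, h2⟩)
    · obtain ⟨i, hne, h | h⟩ := sd_helper h1 h2
      · exact ⟨(i, false), hne, h.symm⟩
      · exact ⟨(i, true), hne, h.symm⟩
    · obtain ⟨i, hne, h | h⟩ := sd_helper h1 h2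
      · exact ⟨(i, false), Ne.symm hne, h.symm⟩
      · exact ⟨(i, true), Ne.symm hne, h.symm⟩
  · rintro ⟨⟨i, c⟩, hne, rfl⟩
    simp only [Set.mem_setOf_eq] at hne
    cases c
    · simp only [cond_false]
      cases hb : b i
      · have hb' : b' i = true := by
          cases hb' : b' i
          · exact absurd (hb.trans hb'.symm) hne
          · rfl
        exact Or.inl ⟨(memWN b i).mpr hb, fun hc => by
          rw [memWN] at hc; simp [hc] at hb'⟩
      · have hb' : b' i = false := by
          cases hb' : b' i
          · rfl
          · exact absurd (hb.trans hb'.symm) hne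
        exact Or.inr ⟨(memWN b' i).mpr hb', fun hc => by
          rw [memWN] at hc; simp [hc] at hb⟩
    · simp only [cond_true]
      cases hb : b i
      · have hb' : b' i = true := by
          cases hb' : b' i
          · exact absurd (hb.trans hb'.symm) hne
          · rfl
        exact Or.inr ⟨(memEN b' i).mpr hb', fun hc => by
          rw [memEN] at hc; simp [hc] at hb⟩
      · have hb' : b' i = false := by
          cases hb' : b' i
          · rfl
          · exact absurd (hb.trans hb'.symm) hne
        exact Or.inl ⟨(memEN b i).mpr hb, fun hc => by
          rw [memEN] at hc; simp [hc] at hb'⟩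

lemma sd_ncard (b b' : Fin n → Bool) :
    (symmDiff (treeEdges b) (treeEdges b')).ncard = 2 * hammingDist b b' := by
  rw [sd_eq]
  have hinj : Function.Injective
      (fun p : Fin n × Bool => s(((cond p.2 Dir.E Dir.W), p.1), (Dir.N, p.1))) := by
    rintro ⟨i, c⟩ ⟨j, d⟩ h
    cases c <;> cases d <;> simp [Sym2.eq_iff, Prod.ext_iff] at h <;> simp [h]
  rw [Set.ncard_image_of_injective _ hinj]
  rw [Set.ncard_eq_toFinset_card']
  have hset : {p : Fin n × Bool | b p.1 ≠ b' p.1}.toFinset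
      = (Finset.univ.filter fun i => b i ≠ b' i) ×ˢ (Finset.univ : Finset Bool) := by
    ext ⟨i, c⟩
    simp
  rw [hset, Finset.card_product]
  simp only [Finset.card_univ, Fintype.card_bool]
  rw [hammingDist]
  omega

end DiamondAux

open DiamondAux in
/-- (i) for every binary string `b` of length `n`, `T_b` is the edge set of a
spanning tree of the diamond-path graph `D_n`; (ii) for all `b, b'`, the symmetric
difference `T_b Δ T_{b'}` has cardinality `2 · d` where `d` is the Hamming distance of
`b` and `b'`; in particular `T_b` and `T_{b'}` differ in an edge exchange (exactly two
edges) iff `d = 1`. -/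
theorem treeEdges_spanning_tree_and_exchange (n : ℕ) (hn : 1 ≤ n) :
    (∀ b : Fin n → Bool,
      (SimpleGraph.fromEdgeSet (treeEdges b)).edgeSet = treeEdges b ∧
      SimpleGraph.fromEdgeSet (treeEdges b) ≤ diamondGraph n ∧
      (SimpleGraph.fromEdgeSet (treeEdges b)).IsTree) ∧
    (∀ b b' : Fin n → Bool,
      (symmDiff (treeEdges b) (treeEdges b')).ncard = 2 * hammingDist b b' ∧
      ((symmDiff (treeEdges b) (treeEdges b')).ncard = 2 ↔ hammingDist b b' = 1)) := by
  constructor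
  · intro b
    refine ⟨?_, ?_, ?_⟩
    · rw [SimpleGraph.edgeSet_fromEdgeSet]
      ext e
      simp only [Set.mem_diff, Set.mem_setOf_eq]
      exact ⟨fun h => h.1, fun h => ⟨h, not_diag b h⟩⟩
    · exact SimpleGraph.fromEdgeSet_mono (sub_diamond b)
    · constructor
      · rw [SimpleGraph.connected_iff]
        refine ⟨fun u v => ((reach b hn (rk u + 1) u (Nat.lt_succ_self _)).trans
            (reach b hn (rk v + 1) v (Nat.lt_succ_self _)).symm), ⟨(Dir.W, ⟨0, hn⟩)⟩⟩
      · exact acyclic_aux rk (par b) (fun h => adj_par b h) (par_lt b)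
  · intro b b'
    refine ⟨sd_ncard b b', ?_⟩
    rw [sd_ncard b b']
    omega
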